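/- The function ψ(x) = c₁·x^(−ν) + c₂·x^(−1+α₀+α₂+ν)·(x−1)^(α₁) satisfies the second-order linear ODE ψ'' + [(2−α₀−α₂)/x + (1−α₁)/(x−1) − 1/(x−b₀)]·ψ' + [ν(ν+α_∞)/(x(x−1)) − k₂·(1/(x(x−1)) − 1/x²) + m₂/(x(x−1)(x−b₀))]·ψ = 0 on any domain avoiding the singular points 0, 1, b₀. -/

import Mathlib

set_option maxHeartbeats 1000000
set_option linter.unnecessarySeqFocus false

lemma div_add_div_zero_key (A B C D : ℂ) (hB : B ≠ 0) (hD : D ≠ 0)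
    (h : A * D + B * C = 0) : A / B + C / D = 0 := by
  rw [div_add_div _ _ hB hD, h, zero_div]

lemma stmt0_aux1 (α₀ α₁ α₂ α_inf ν x : ℂ)
    (hfuchs : α₀ + α₁ + α₂ + α_inf = 1 - 2 * ν) (hinf : α_inf ≠ 0)
    (hx0 : x ≠ 0) (hx1 : x - 1 ≠ 0) (hxb : x - (α_inf + α₁) / α_inf ≠ 0) :
    (-ν * x⁻¹) * (-ν * x⁻¹) + (-ν * -(x ^ 2)⁻¹)
    + ((2 - α₀ - α₂) / x + (1 - α₁) / (x - 1)
        - 1 / (x - (α_inf + α₁) / α_inf)) * (-ν * x⁻¹)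
    + (ν * (ν + α_inf) / (x * (x - 1))
        - (ν * (1 - α₀ - α₂ - ν)) * (1 / (x * (x - 1)) - 1 / x ^ 2)
        + (-ν * α₁ / α_inf) / (x * (x - 1) * (x - (α_inf + α₁) / α_inf))) = 0 := by
  have hb : x - (α_inf + α₁) / α_inf = (x * α_inf - α_inf - α₁) / α_inf := by
    field_simp
    ring
  have hd : x * α_inf - α_inf - α₁ ≠ 0 := by
    intro h
    apply hxb
    rw [hb, h, zero_div]
  have hd' : α_inf * (x - 1) - α₁ ≠ 0 := by
    intro h; apply hd; linear_combination h
  have hd'' : -α₁ - α_inf + α_inf * x ≠ 0 := by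
    intro h; apply hd; linear_combination h
  have hs : α₀ = 1 - 2 * ν - α₁ - α₂ - α_inf := by linear_combination hfuchs
  subst hs
  rw [hb, one_div_div, ← mul_div_assoc, div_div_eq_mul_div]
  field_simp
  ring

lemma stmt0_aux2 (α₀ α₁ α₂ α_inf ν x : ℂ)
    (hfuchs : α₀ + α₁ + α₂ + α_inf = 1 - 2 * ν) (hinf : α_inf ≠ 0)
    (hx0 : x ≠ 0) (hx1 : x - 1 ≠ 0) (hxb : x - (α_inf + α₁) / α_inf ≠ 0) :
    ((-1 + α₀ + α₂ + ν) * x⁻¹) * ((-1 + α₀ + α₂ + ν) * x⁻¹)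
    + ((-1 + α₀ + α₂ + ν) * -(x ^ 2)⁻¹)
    + 2 * (((-1 + α₀ + α₂ + ν) * x⁻¹) * (α₁ * (x - 1)⁻¹))
    + (α₁ * (x - 1)⁻¹) * (α₁ * (x - 1)⁻¹) + (α₁ * -((x - 1) ^ 2)⁻¹)
    + ((2 - α₀ - α₂) / x + (1 - α₁) / (x - 1)
        - 1 / (x - (α_inf + α₁) / α_inf)) *
      ((-1 + α₀ + α₂ + ν) * x⁻¹ + α₁ * (x - 1)⁻¹)
    + (ν * (ν + α_inf) / (x * (x - 1))
        - (ν * (1 - α₀ - α₂ - ν)) * (1 / (x * (x - 1)) - 1 / x ^ 2)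
        + (-ν * α₁ / α_inf) / (x * (x - 1) * (x - (α_inf + α₁) / α_inf))) = 0 := by
  have hb : x - (α_inf + α₁) / α_inf = (x * α_inf - α_inf - α₁) / α_inf := by
    field_simp
    ring
  have hd : x * α_inf - α_inf - α₁ ≠ 0 := by
    intro h
    apply hxb
    rw [hb, h, zero_div]
  have hd' : α_inf * (x - 1) - α₁ ≠ 0 := by
    intro h; apply hd; linear_combination h
  have hd'' : -α₁ - α_inf + α_inf * x ≠ 0 := by
    intro h; apply hd; linear_combination h
  have hs : α₀ = 1 - 2 * ν - α₁ - α₂ - α_inf := by linear_combination hfuchs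
  subst hs
  rw [hb, one_div_div, ← mul_div_assoc, div_div_eq_mul_div]
  have hD2 : x ^ 2 * (x - 1) ^ 2 * (x * α_inf - α_inf - α₁) * α_inf ≠ 0 :=
    mul_ne_zero (mul_ne_zero (mul_ne_zero (pow_ne_zero _ hx0) (pow_ne_zero _ hx1)) hd) hinf
  refine Or.resolve_right (mul_eq_zero.mp ?_) hD2
  have t1 : (((-ν - α₁ - α_inf) * x⁻¹) * ((-ν - α₁ - α_inf) * x⁻¹)) *
      (x ^ 2 * (x - 1) ^ 2 * (x * α_inf - α_inf - α₁) * α_inf)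
      = (-ν - α₁ - α_inf) ^ 2 * (x - 1) ^ 2 * (x * α_inf - α_inf - α₁) * α_inf := by
    field_simp
  have t2 : ((-ν - α₁ - α_inf) * -(x ^ 2)⁻¹) *
      (x ^ 2 * (x - 1) ^ 2 * (x * α_inf - α_inf - α₁) * α_inf)
      = -(-ν - α₁ - α_inf) * (x - 1) ^ 2 * (x * α_inf - α_inf - α₁) * α_inf := by
    field_simp
  have t3 : (2 * (((-ν - α₁ - α_inf) * x⁻¹) * (α₁ * (x - 1)⁻¹))) *
      (x ^ 2 * (x - 1) ^ 2 * (x * α_inf - α_inf - α₁) * α_inf)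
      = 2 * (-ν - α₁ - α_inf) * α₁ * x * (x - 1) * (x * α_inf - α_inf - α₁) * α_inf := by
    field_simp
  have t4 : ((α₁ * (x - 1)⁻¹) * (α₁ * (x - 1)⁻¹)) *
      (x ^ 2 * (x - 1) ^ 2 * (x * α_inf - α_inf - α₁) * α_inf)
      = α₁ ^ 2 * x ^ 2 * (x * α_inf - α_inf - α₁) * α_inf := by
    field_simp
  have t5 : (α₁ * -((x - 1) ^ 2)⁻¹) *
      (x ^ 2 * (x - 1) ^ 2 * (x * α_inf - α_inf - α₁) * α_inf)
      = -α₁ * x ^ 2 * (x * α_inf - α_inf - α₁) * α_inf := by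
    field_simp
  have t6 : (((1 + 2 * ν + α₁ + α_inf) / x + (1 - α₁) / (x - 1)
        - α_inf / (x * α_inf - α_inf - α₁)) *
      ((-ν - α₁ - α_inf) * x⁻¹ + α₁ * (x - 1)⁻¹)) *
      (x ^ 2 * (x - 1) ^ 2 * (x * α_inf - α_inf - α₁) * α_inf)
      = ((1 + 2 * ν + α₁ + α_inf) * (-ν - α₁ - α_inf) * (x - 1) ^ 2
          + (1 + 2 * ν + α₁ + α_inf) * α₁ * x * (x - 1)
          + (1 - α₁) * (-ν - α₁ - α_inf) * x * (x - 1)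
          + (1 - α₁) * α₁ * x ^ 2) * (x * α_inf - α_inf - α₁) * α_inf
        - ((-ν - α₁ - α_inf) * x * (x - 1) ^ 2 + α₁ * x ^ 2 * (x - 1)) * α_inf ^ 2 := by
    field_simp
    ring
  have t7 : (ν * (ν + α_inf) / (x * (x - 1))) *
      (x ^ 2 * (x - 1) ^ 2 * (x * α_inf - α_inf - α₁) * α_inf)
      = ν * (ν + α_inf) * x * (x - 1) * (x * α_inf - α_inf - α₁) * α_inf := by
    field_simp
  have t8 : (-(ν * (ν + α₁ + α_inf)) * (1 / (x * (x - 1)) - 1 / x ^ 2)) *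
      (x ^ 2 * (x - 1) ^ 2 * (x * α_inf - α_inf - α₁) * α_inf)
      = -(ν * (ν + α₁ + α_inf)) * (x * (x - 1) - (x - 1) ^ 2) *
          (x * α_inf - α_inf - α₁) * α_inf := by
    field_simp
  have t9 : ((-ν * α₁ / α_inf) * α_inf / (x * (x - 1) * (x * α_inf - α_inf - α₁))) *
      (x ^ 2 * (x - 1) ^ 2 * (x * α_inf - α_inf - α₁) * α_inf)
      = -ν * α₁ * x * (x - 1) * α_inf := by
    field_simp
  linear_combination t1 + t2 + t3 + t4 + t5 + t6 + t7 + t8 + t9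

/-- ψ(x) = c₁·x^(−ν) + c₂·x^(−1+α₀+α₂+ν)·(x−1)^(α₁) satisfies the Heun-type
equation obtained in the first limit for solution (1).  Branches of complex powers are
modelled via branches `L`, `L1` of the logarithms of `x` and `x−1` on a domain `U`
avoiding the singular points `0`, `1`, `b₀`. -/
theorem stmt0 (α₀ α₁ α₂ α_inf ν c₁ c₂ : ℂ)
    (hfuchs : α₀ + α₁ + α₂ + α_inf = 1 - 2 * ν)
    (hinf : α_inf ≠ 0) (h1 : 1 - α_inf - α₁ ≠ 0)
    (U : Set ℂ) (hU : IsOpen U) (hUc : IsPreconnected U)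
    (hU0 : (0 : ℂ) ∉ U) (hU1 : (1 : ℂ) ∉ U)
    (hUb : (α_inf + α₁) / α_inf ∉ U)
    (L L1 : ℂ → ℂ)
    (hL : ∀ x ∈ U, HasDerivAt L x⁻¹ x)
    (hLexp : ∀ x ∈ U, Complex.exp (L x) = x)
    (hL1 : ∀ x ∈ U, HasDerivAt L1 (x - 1)⁻¹ x)
    (hL1exp : ∀ x ∈ U, Complex.exp (L1 x) = x - 1) :
    ∀ x ∈ U,
      deriv (deriv (fun x => c₁ * Complex.exp (-ν * L x) +
          c₂ * Complex.exp ((-1 + α₀ + α₂ + ν) * L x) * Complex.exp (α₁ * L1 x))) x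
      + ((2 - α₀ - α₂) / x + (1 - α₁) / (x - 1)
          - 1 / (x - (α_inf + α₁) / α_inf)) *
        deriv (fun x => c₁ * Complex.exp (-ν * L x) +
          c₂ * Complex.exp ((-1 + α₀ + α₂ + ν) * L x) * Complex.exp (α₁ * L1 x)) x
      + (ν * (ν + α_inf) / (x * (x - 1))
          - (ν * (1 - α₀ - α₂ - ν)) * (1 / (x * (x - 1)) - 1 / x ^ 2)
          + (-ν * α₁ / α_inf) / (x * (x - 1) * (x - (α_inf + α₁) / α_inf))) *
        (c₁ * Complex.exp (-ν * L x) +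
          c₂ * Complex.exp ((-1 + α₀ + α₂ + ν) * L x) * Complex.exp (α₁ * L1 x)) = 0 := by
  intro x hx
  set a : ℂ := -1 + α₀ + α₂ + ν with ha
  set f : ℂ → ℂ := fun x => c₁ * Complex.exp (-ν * L x) +
      c₂ * Complex.exp (a * L x) * Complex.exp (α₁ * L1 x) with hf
  have hx0 : x ≠ 0 := fun h => hU0 (h ▸ hx)
  have hx1 : x ≠ 1 := fun h => hU1 (h ▸ hx)
  have hxb : x ≠ (α_inf + α₁) / α_inf := fun h => hUb (h ▸ hx)
  have hx1' : x - 1 ≠ 0 := sub_ne_zero.mpr hx1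
  have hxb' : x - (α_inf + α₁) / α_inf ≠ 0 := sub_ne_zero.mpr hxb
  set F : ℂ → ℂ := fun x => c₁ * (Complex.exp (-ν * L x) * (-ν * x⁻¹)) +
      (c₂ * (Complex.exp (a * L x) * (a * x⁻¹)) * Complex.exp (α₁ * L1 x) +
       c₂ * Complex.exp (a * L x) * (Complex.exp (α₁ * L1 x) * (α₁ * (x - 1)⁻¹))) with hF
  have key : ∀ y ∈ U, HasDerivAt f (F y) y := by
    intro y hy
    exact ((((hL y hy).const_mul (-ν)).cexp).const_mul c₁).add
      (((((hL y hy).const_mul a).cexp).const_mul c₂).mul (((hL1 y hy).const_mul α₁).cexp))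
  have hderiv1 : ∀ y ∈ U, deriv f y = F y := fun y hy => (key y hy).deriv
  have hinvx : HasDerivAt (fun y : ℂ => y⁻¹) (-(x ^ 2)⁻¹) x := hasDerivAt_inv hx0
  have hinvx1 : HasDerivAt (fun y : ℂ => (y - 1)⁻¹) (-((x - 1) ^ 2)⁻¹) x := by
    have h := (((hasDerivAt_id x).sub_const 1).inv hx1')
    refine h.congr_deriv ?_
    simp only [id]
    field_simp
  have hE0 : HasDerivAt (fun y => Complex.exp (-ν * L y))
      (Complex.exp (-ν * L x) * (-ν * x⁻¹)) x := ((hL x hx).const_mul (-ν)).cexp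
  have hEa : HasDerivAt (fun y => Complex.exp (a * L y))
      (Complex.exp (a * L x) * (a * x⁻¹)) x := ((hL x hx).const_mul a).cexp
  have hE1 : HasDerivAt (fun y => Complex.exp (α₁ * L1 y))
      (Complex.exp (α₁ * L1 x) * (α₁ * (x - 1)⁻¹)) x := ((hL1 x hx).const_mul α₁).cexp
  have keyF : HasDerivAt F
      (c₁ * ((Complex.exp (-ν * L x) * (-ν * x⁻¹)) * (-ν * x⁻¹) +
          Complex.exp (-ν * L x) * (-ν * -(x ^ 2)⁻¹)) +
       ((c₂ * ((Complex.exp (a * L x) * (a * x⁻¹)) * (a * x⁻¹) +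
            Complex.exp (a * L x) * (a * -(x ^ 2)⁻¹)) * Complex.exp (α₁ * L1 x) +
          c₂ * (Complex.exp (a * L x) * (a * x⁻¹)) *
            (Complex.exp (α₁ * L1 x) * (α₁ * (x - 1)⁻¹))) +
        ((c₂ * (Complex.exp (a * L x) * (a * x⁻¹))) *
            (Complex.exp (α₁ * L1 x) * (α₁ * (x - 1)⁻¹)) +
         (c₂ * Complex.exp (a * L x)) *
            ((Complex.exp (α₁ * L1 x) * (α₁ * (x - 1)⁻¹)) * (α₁ * (x - 1)⁻¹) +
             Complex.exp (α₁ * L1 x) * (α₁ * -((x - 1) ^ 2)⁻¹))))) x := by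
    refine HasDerivAt.add ?_ (HasDerivAt.add ?_ ?_)
    · exact ((hE0.mul (hinvx.const_mul (-ν))).const_mul c₁)
    · exact (((hEa.mul (hinvx.const_mul a)).const_mul c₂).mul hE1)
    · exact ((hEa.const_mul c₂).mul (hE1.mul (hinvx1.const_mul α₁)))
  have hd2 : deriv (deriv f) x = deriv F x := by
    apply Filter.EventuallyEq.deriv_eq
    exact Filter.eventuallyEq_of_mem (hU.mem_nhds hx) hderiv1
  rw [hd2, keyF.deriv, hderiv1 x hx]
  simp only [hf, hF]
  linear_combination
    (c₁ * Complex.exp (-ν * L x)) *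
      stmt0_aux1 α₀ α₁ α₂ α_inf ν x hfuchs hinf hx0 hx1' hxb' +
    (c₂ * Complex.exp (a * L x) * Complex.exp (α₁ * L1 x)) *
      stmt0_aux2 α₀ α₁ α₂ α_inf ν x hfuchs hinf hx0 hx1' hxb'
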